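/- In a number-conserving non-uniform cyclic CA of length n, for each cell i: if f_i(1,0,0) ≠ f_i(0,0,0) then f_i(1,0,1) = 1 and f_i(0,0,1) = 0. -/

import Mathlib

/-- Global map of a non-uniform cyclic CA of length `n`:
cell `i` updates via its local rule applied to `(x (i-1), x i, x (i+1))`, indices mod `n`. -/
def caStep (n : ℕ) [NeZero n] (f : Fin n → Bool → Bool → Bool → Bool)
    (x : Fin n → Bool) : Fin n → Bool :=
  fun i => f i (x (i - 1)) (x i) (x (i + 1))

/-- Number of cells in state `true` (i.e. 1). -/
def onesCount (n : ℕ) (x : Fin n → Bool) : ℕ :=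
  (Finset.univ.filter fun i => x i = true).card

/-- The CA conserves the number of 1s in every configuration. -/
def numberConserving (n : ℕ) [NeZero n] (f : Fin n → Bool → Bool → Bool → Bool) : Prop :=
  ∀ x : Fin n → Bool, onesCount n (caStep n f x) = onesCount n x

/-- The elementary CA rule with Wolfram number `R`. -/
def wolfram (R : ℕ) (a b c : Bool) : Bool :=
  R.testBit (4 * a.toNat + 2 * b.toNat + c.toNat)

open Fin.NatCast

section Aux
variable {n : ℕ} [NeZero n]

omit [NeZero n] in
lemma onesCount_eq_sum (x : Fin n → Bool) : onesCount n x = ∑ i, (x i).toNat := by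
  unfold onesCount
  rw [Finset.card_filter]
  apply Finset.sum_congr rfl
  intro i _
  cases x i <;> simp

lemma cast_inj_aux (a b : ℕ) (ha : a < n) (hb : b < n) :
    ((a : Fin n) = (b : Fin n)) ↔ a = b := by
  rw [Fin.ext_iff, Fin.val_cast_of_lt ha, Fin.val_cast_of_lt hb]

lemma add_cast_ne (j : Fin n) (a b : ℕ) (ha : a < n) (hb : b < n) (hab : a ≠ b) :
    j + (a : Fin n) ≠ j + (b : Fin n) := by
  intro hh
  rw [add_right_inj, cast_inj_aux a b ha hb] at hh
  exact hab hh

lemma add_cast_ne_self (j : Fin n) (c : ℕ) (h0 : 0 < c) (hc : c < n) :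
    j + (c : Fin n) ≠ j := by
  intro hh
  rw [add_eq_left, ← Nat.cast_zero,
    cast_inj_aux c 0 hc (Nat.pos_of_ne_zero (NeZero.ne n))] at hh
  omega

lemma sub_one_eq (j : Fin n) : j - 1 = j + ((n - 1 : ℕ) : Fin n) := by
  rw [sub_eq_iff_eq_add, add_assoc, ← Nat.cast_add_one,
    Nat.sub_add_cancel (Nat.pos_of_ne_zero (NeZero.ne n)), Fin.natCast_self, add_zero]

lemma add_cast_add_one (j : Fin n) (c : ℕ) :
    (j + (c : Fin n)) + 1 = j + ((c + 1 : ℕ) : Fin n) := by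
  rw [add_assoc, ← Nat.cast_add_one]

lemma add_cast_sub_one (j : Fin n) (c : ℕ) (hc : 1 ≤ c) :
    (j + (c : Fin n)) - 1 = j + ((c - 1 : ℕ) : Fin n) := by
  rw [sub_eq_iff_eq_add, add_assoc, ← Nat.cast_add_one, Nat.sub_add_cancel hc]

lemma add_cast_n (j : Fin n) : j + ((n : ℕ) : Fin n) = j := by
  rw [Fin.natCast_self, add_zero]
end Aux


theorem stmt13 (n : ℕ) (hn : 5 ≤ n) [NeZero n] (f : Fin n → Bool → Bool → Bool → Bool)
    (h : numberConserving n f) :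
    ∀ i : Fin n, f i true false false ≠ f i false false false →
      f i true false true = true ∧ f i false false true = false := by
  have hsum : ∀ x : Fin n → Bool,
      ∑ k, (f k (x (k-1)) (x k) (x (k+1))).toNat = ∑ k, (x k).toNat := by
    intro x
    have := h x
    rw [onesCount_eq_sum, onesCount_eq_sum] at this
    exact this
  -- f_i(0,0,0) = 0
  have hz : ∀ k : Fin n, f k false false false = false := by
    intro k
    have h0 := hsum (fun _ => false)
    simp only [Bool.toNat_false, Finset.sum_const_zero] at h0
    have := (Finset.sum_eq_zero_iff.mp h0) k (Finset.mem_univ k)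
    simpa using this
  -- index arithmetic facts
  have en1 : ∀ j : Fin n, j + ((n-1:ℕ) : Fin n) - 1 = j + ((n-2:ℕ) : Fin n) := by
    intro j
    rw [add_cast_sub_one j (n-1) (by omega)]
    have : n - 1 - 1 = n - 2 := by omega
    rw [this]
  have en2 : ∀ j : Fin n, j + ((n-1:ℕ) : Fin n) + 1 = j := by
    intro j
    rw [add_cast_add_one, Nat.sub_add_cancel (by omega), add_cast_n]
  have e0p : ∀ j : Fin n, j + 1 = j + ((1:ℕ) : Fin n) := by
    intro j; rw [Nat.cast_one]
  have e1m : ∀ j : Fin n, j + ((1:ℕ) : Fin n) - 1 = j := by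
    intro j
    rw [add_cast_sub_one j 1 le_rfl]
    norm_num
  have e1p : ∀ j : Fin n, j + ((1:ℕ) : Fin n) + 1 = j + ((2:ℕ) : Fin n) := by
    intro j; rw [add_cast_add_one]
  have e2m : ∀ j : Fin n, j + ((2:ℕ) : Fin n) - 1 = j + ((1:ℕ) : Fin n) := by
    intro j; rw [add_cast_sub_one j 2 (by omega)]
  have e2p : ∀ j : Fin n, j + ((2:ℕ) : Fin n) + 1 = j + ((3:ℕ) : Fin n) := by
    intro j; rw [add_cast_add_one]
  have e3m : ∀ j : Fin n, j + ((3:ℕ) : Fin n) - 1 = j + ((2:ℕ) : Fin n) := by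
    intro j; rw [add_cast_sub_one j 3 (by omega)]
  have e3p : ∀ j : Fin n, j + ((3:ℕ) : Fin n) + 1 = j + ((4:ℕ) : Fin n) := by
    intro j; rw [add_cast_add_one]
  -- sum of an indicator
  have hsingle : ∀ m : Fin n, ∑ k, (decide (k = m)).toNat = 1 := by
    intro m
    rw [Finset.sum_eq_single m]
    · simp
    · intro b _ hb; simp [hb]
    · intro hm; exact absurd (Finset.mem_univ m) hm
  -- single-one configuration identity
  have hone : ∀ j : Fin n,
      (f (j + ((n-1:ℕ) : Fin n)) false false true).toNat + (f j false true false).toNat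
        + (f (j + ((1:ℕ) : Fin n)) true false false).toNat = 1 := by
    intro j
    set x : Fin n → Bool := fun k => decide (k = j) with hx
    have hmain := hsum x
    rw [hsingle j] at hmain
    set s3 : Finset (Fin n) :=
      insert (j + ((n-1:ℕ) : Fin n)) (insert j {j + ((1:ℕ) : Fin n)}) with hs3
    have hsupp : ∀ k ∈ Finset.univ, k ∉ s3 →
        (f k (x (k-1)) (x k) (x (k+1))).toNat = 0 := by
      intro k _ hk
      simp only [hs3, Finset.mem_insert, Finset.mem_singleton, not_or] at hk
      obtain ⟨hk1, hk2, hk3⟩ := hk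
      have e1 : x (k - 1) = false := by
        simp only [hx, decide_eq_false_iff_not]
        intro hh
        rw [sub_eq_iff_eq_add, e0p j] at hh
        exact hk3 hh
      have e2 : x k = false := by
        simp only [hx, decide_eq_false_iff_not]; exact hk2
      have e3 : x (k + 1) = false := by
        simp only [hx, decide_eq_false_iff_not]
        intro hh
        apply hk1
        have hk' : k = j - 1 := eq_sub_iff_add_eq.mpr hh
        rwa [sub_one_eq j] at hk'
      rw [e1, e2, e3, hz k]
      rfl
    rw [← Finset.sum_subset (Finset.subset_univ s3) hsupp] at hmain
    have m1 : j + ((n-1:ℕ) : Fin n) ∉ insert j ({j + ((1:ℕ) : Fin n)} : Finset (Fin n)) := by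
      simp only [Finset.mem_insert, Finset.mem_singleton, not_or]
      exact ⟨add_cast_ne_self j (n-1) (by omega) (by omega),
        add_cast_ne j (n-1) 1 (by omega) (by omega) (by omega)⟩
    have m2 : j ∉ ({j + ((1:ℕ) : Fin n)} : Finset (Fin n)) := by
      simp only [Finset.mem_singleton]
      exact (add_cast_ne_self j 1 (by omega) (by omega)).symm
    rw [hs3, Finset.sum_insert m1, Finset.sum_insert m2, Finset.sum_singleton] at hmain
    rw [en1 j, en2 j, e1m j, e1p j, sub_one_eq j, e0p j] at hmain
    have xj : x j = true := by simp [hx]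
    have xv : ∀ c : ℕ, 0 < c → c < n → x (j + (c : Fin n)) = false := by
      intro c h0 hc
      simp only [hx, decide_eq_false_iff_not]
      exact add_cast_ne_self j c h0 hc
    rw [xj, xv (n-1) (by omega) (by omega), xv (n-2) (by omega) (by omega),
      xv 1 (by omega) (by omega), xv 2 (by omega) (by omega)] at hmain
    omega
  -- two-ones configuration identity (ones at j and j+2)
  have hpair : ∀ j : Fin n,
      (f (j + ((n-1:ℕ) : Fin n)) false false true).toNat + (f j false true false).toNat
        + (f (j + ((1:ℕ) : Fin n)) true false true).toNat
        + (f (j + ((2:ℕ) : Fin n)) false true false).toNat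
        + (f (j + ((3:ℕ) : Fin n)) true false false).toNat = 2 := by
    intro j
    set x : Fin n → Bool := fun k => decide (k = j ∨ k = j + ((2:ℕ) : Fin n)) with hx
    have hj2 : j ≠ j + ((2:ℕ) : Fin n) :=
      (add_cast_ne_self j 2 (by omega) (by omega)).symm
    have hrhs : ∑ k, (x k).toNat = 2 := by
      have hsplit : ∀ k, (x k).toNat
          = (decide (k = j)).toNat + (decide (k = j + ((2:ℕ) : Fin n))).toNat := by
        intro k
        have e : x k = (decide (k = j) || decide (k = j + ((2:ℕ) : Fin n))) := by
          simp only [hx, Bool.decide_or]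
        rw [e]
        by_cases h1 : k = j
        · have h2 : ¬ k = j + ((2:ℕ) : Fin n) := fun hh => hj2 (h1 ▸ hh)
          rw [decide_eq_true h1, decide_eq_false h2]
          rfl
        · rw [decide_eq_false h1]
          cases decide (k = j + ((2:ℕ) : Fin n)) <;> rfl
      calc ∑ k, (x k).toNat
          = ∑ k, ((decide (k = j)).toNat + (decide (k = j + ((2:ℕ) : Fin n))).toNat) :=
            Finset.sum_congr rfl (fun k _ => hsplit k)
        _ = 2 := by rw [Finset.sum_add_distrib, hsingle j, hsingle (j + ((2:ℕ) : Fin n))]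
    have hmain := hsum x
    rw [hrhs] at hmain
    set s5 : Finset (Fin n) :=
      insert (j + ((n-1:ℕ) : Fin n)) (insert j (insert (j + ((1:ℕ) : Fin n))
        (insert (j + ((2:ℕ) : Fin n)) {j + ((3:ℕ) : Fin n)}))) with hs5
    have hsupp : ∀ k ∈ Finset.univ, k ∉ s5 →
        (f k (x (k-1)) (x k) (x (k+1))).toNat = 0 := by
      intro k _ hk
      simp only [hs5, Finset.mem_insert, Finset.mem_singleton, not_or] at hk
      obtain ⟨hk1, hk2, hk3, hk4, hk5⟩ := hk
      have e1 : x (k - 1) = false := by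
        simp only [hx, decide_eq_false_iff_not, not_or]
        constructor
        · intro hh
          rw [sub_eq_iff_eq_add, e0p j] at hh
          exact hk3 hh
        · intro hh
          rw [sub_eq_iff_eq_add, e2p j] at hh
          exact hk5 hh
      have e2 : x k = false := by
        simp only [hx, decide_eq_false_iff_not, not_or]; exact ⟨hk2, hk4⟩
      have e3 : x (k + 1) = false := by
        simp only [hx, decide_eq_false_iff_not, not_or]
        constructor
        · intro hh
          apply hk1
          have hk' : k = j - 1 := eq_sub_iff_add_eq.mpr hh
          rwa [sub_one_eq j] at hk'
        · intro hh
          apply hk3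
          have hk' : k = j + ((2:ℕ) : Fin n) - 1 := eq_sub_iff_add_eq.mpr hh
          rwa [e2m j] at hk' 
      rw [e1, e2, e3, hz k]
      rfl
    rw [← Finset.sum_subset (Finset.subset_univ s5) hsupp] at hmain
    have m1 : j + ((n-1:ℕ) : Fin n) ∉ insert j (insert (j + ((1:ℕ) : Fin n))
        (insert (j + ((2:ℕ) : Fin n)) ({j + ((3:ℕ) : Fin n)} : Finset (Fin n)))) := by
      simp only [Finset.mem_insert, Finset.mem_singleton, not_or]
      exact ⟨add_cast_ne_self j (n-1) (by omega) (by omega),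
        add_cast_ne j (n-1) 1 (by omega) (by omega) (by omega),
        add_cast_ne j (n-1) 2 (by omega) (by omega) (by omega),
        add_cast_ne j (n-1) 3 (by omega) (by omega) (by omega)⟩
    have m2 : j ∉ insert (j + ((1:ℕ) : Fin n))
        (insert (j + ((2:ℕ) : Fin n)) ({j + ((3:ℕ) : Fin n)} : Finset (Fin n))) := by
      simp only [Finset.mem_insert, Finset.mem_singleton, not_or]
      exact ⟨(add_cast_ne_self j 1 (by omega) (by omega)).symm,
        (add_cast_ne_self j 2 (by omega) (by omega)).symm,
        (add_cast_ne_self j 3 (by omega) (by omega)).symm⟩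
    have m3 : j + ((1:ℕ) : Fin n) ∉
        insert (j + ((2:ℕ) : Fin n)) ({j + ((3:ℕ) : Fin n)} : Finset (Fin n)) := by
      simp only [Finset.mem_insert, Finset.mem_singleton, not_or]
      exact ⟨add_cast_ne j 1 2 (by omega) (by omega) (by omega),
        add_cast_ne j 1 3 (by omega) (by omega) (by omega)⟩
    have m4 : j + ((2:ℕ) : Fin n) ∉ ({j + ((3:ℕ) : Fin n)} : Finset (Fin n)) := by
      simp only [Finset.mem_singleton]
      exact add_cast_ne j 2 3 (by omega) (by omega) (by omega)
    rw [hs5, Finset.sum_insert m1, Finset.sum_insert m2, Finset.sum_insert m3,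
      Finset.sum_insert m4, Finset.sum_singleton] at hmain
    rw [en1 j, en2 j, e1m j, e1p j, e2m j, e2p j, e3m j, e3p j,
      sub_one_eq j, e0p j] at hmain
    have xj : x j = true := by simp [hx]
    have xj2 : x (j + ((2:ℕ) : Fin n)) = true := by simp [hx]
    have xv : ∀ c : ℕ, 0 < c → c < n → c ≠ 2 → x (j + (c : Fin n)) = false := by
      intro c h0 hc hc2
      simp only [hx, decide_eq_false_iff_not, not_or]
      exact ⟨add_cast_ne_self j c h0 hc, add_cast_ne j c 2 hc (by omega) hc2⟩
    rw [xj, xj2, xv (n-1) (by omega) (by omega) (by omega),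
      xv (n-2) (by omega) (by omega) (by omega),
      xv 1 (by omega) (by omega) (by omega),
      xv 3 (by omega) (by omega) (by omega),
      xv 4 (by omega) (by omega) (by omega)] at hmain
    omega
  -- conclusion
  intro i hi
  set j : Fin n := i - 1 with hj
  have hij : j + ((1:ℕ) : Fin n) = i := by
    rw [hj, Nat.cast_one, sub_add_cancel]
  rw [← hij] at hi
  rw [hz (j + ((1:ℕ) : Fin n))] at hi
  have htff : f (j + ((1:ℕ) : Fin n)) true false false = true := by
    revert hi
    cases f (j + ((1:ℕ) : Fin n)) true false false <;> simp
  have key1 : (j + ((2:ℕ) : Fin n)) + ((n-1:ℕ) : Fin n) = j + ((1:ℕ) : Fin n) := by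
    rw [add_assoc, ← Nat.cast_add]
    have : 2 + (n-1) = n + 1 := by omega
    rw [this, Nat.cast_add, Fin.natCast_self, zero_add]
  have key2 : (j + ((2:ℕ) : Fin n)) + ((1:ℕ) : Fin n) = j + ((3:ℕ) : Fin n) := by
    rw [add_assoc, ← Nat.cast_add]
  have h1 := hone j
  rw [htff] at h1
  simp only [Bool.toNat_true] at h1
  have h2 := hone (j + ((2:ℕ) : Fin n))
  rw [key1, key2] at h2
  have hp := hpair j
  have b1 : (f (j + ((1:ℕ) : Fin n)) true false true).toNat ≤ 1 := Bool.toNat_le _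
  have b2 : (f (j + ((1:ℕ) : Fin n)) false false true).toNat ≤ 1 := Bool.toNat_le _
  constructor
  · rw [← hij]
    have : (f (j + ((1:ℕ) : Fin n)) true false true).toNat = 1 := by omega
    revert this
    cases f (j + ((1:ℕ) : Fin n)) true false true <;> simp
  · rw [← hij]
    have : (f (j + ((1:ℕ) : Fin n)) false false true).toNat = 0 := by omega
    revert this
    cases f (j + ((1:ℕ) : Fin n)) false false true <;> simp
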